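/- Let Y be an m×n zero-nonzero pattern and let G be the cobipartite graph associated with Y. If G is saturated with respect to the corresponding clique partition, then Z(G) = m + n − tri(Y). -/

import Mathlib

/-!  Common definitions: zero forcing (standard, loop, positive semidefinite),
zero-nonzero patterns, triangles, and related graph parameters. -/

variable {V : Type*}

/-- Standard zero forcing rule: with filled set `S`, the filled vertex `v` can force
its unique unfilled neighbor `u`. -/
def StdForce (G : SimpleGraph V) (S : Set V) (v u : V) : Prop :=
  v ∈ S ∧ u ∉ S ∧ G.Adj v u ∧ ∀ w, G.Adj v w → w ∉ S → w = u

/-- Adjacency in the looping of `G` with loops at the vertices in `L`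
(a vertex counts as its own neighbor iff it has a loop). -/
def LoopAdj (G : SimpleGraph V) (L : Set V) (v w : V) : Prop :=
  G.Adj v w ∨ (v = w ∧ v ∈ L)

/-- Loop zero forcing rule (the forcing vertex need not be filled): `v` can force `u`
if `u` is the only unfilled neighbor of `v` in the looping. -/
def LoopForce (G : SimpleGraph V) (L : Set V) (S : Set V) (v u : V) : Prop :=
  u ∉ S ∧ LoopAdj G L v u ∧ ∀ w, LoopAdj G L v w → w ∉ S → w = u

/-- Positive semidefinite zero forcing rule: the filled vertex `v` can force the unfilled
vertex `u` if `u` is the only neighbor of `v` in the connected component of `u` of the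
subgraph induced by the unfilled vertices. -/
def PsdForce (G : SimpleGraph V) (S : Set V) (v u : V) : Prop :=
  v ∈ S ∧ u ∉ S ∧ G.Adj v u ∧
    ∀ w, G.Adj v w → w ∉ S →
      Relation.ReflTransGen (fun a b => G.Adj a b ∧ a ∉ S ∧ b ∉ S) u w → w = u

/-- The vertices performing a force in a forcing sequence. -/
def sourcesOf (seq : List (V × V)) : Set V := {v | ∃ p ∈ seq, p.1 = v}

/-- The vertices that get forced in a forcing sequence. -/
def targetsOf (seq : List (V × V)) : Set V := {u | ∃ p ∈ seq, p.2 = u}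

/-- The filled set after performing all forces of `seq` starting from `F`. -/
def filledAfter (F : Set V) (seq : List (V × V)) : Set V := F ∪ targetsOf seq

/-- `ValidSeq rule seq F`: starting with `F` as the filled set, the sequence of forces
`seq` is permitted (each force in turn is allowed by `rule`, and each vertex forces
at most once). -/
def ValidSeq (rule : Set V → V → V → Prop) : List (V × V) → Set V → Prop
  | [], _ => True
  | (v, u) :: rest, F => rule F v u ∧ (∀ p ∈ rest, p.1 ≠ v) ∧ ValidSeq rule rest (insert u F)

/-- `F` is a zero forcing set w.r.t. the forcing rule `rule`. -/
def IsZFSet (rule : Set V → V → V → Prop) (F : Set V) : Prop :=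
  ∃ seq : List (V × V), ValidSeq rule seq F ∧ filledAfter F seq = Set.univ

/-- `F` is a zero forcing set (w.r.t. `rule`) from which `R` can be the set of vertices
that force: some (automatically complete) forcing sequence from `F` fills every vertex
and the set of vertices performing a force is exactly `R`. -/
def ForcesWith (rule : Set V → V → V → Prop) (F R : Set V) : Prop :=
  ∃ seq : List (V × V), ValidSeq rule seq F ∧ filledAfter F seq = Set.univ ∧
    sourcesOf seq = R

/-- The zero forcing number w.r.t. a forcing rule. -/
noncomputable def Znum (rule : Set V → V → V → Prop) : ℕ :=
  sInf {n | ∃ F : Set V, IsZFSet rule F ∧ F.ncard = n}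

/-- The (standard) zero forcing number `Z(G)`. -/
noncomputable def Z (G : SimpleGraph V) : ℕ := Znum (StdForce G)

/-- The zero forcing number of the looping of `G` with loops at `L`. -/
noncomputable def Zloop (G : SimpleGraph V) (L : Set V) : ℕ := Znum (LoopForce G L)

/-- The positive semidefinite zero forcing number `Z₊(G)`. -/
noncomputable def Zplus (G : SimpleGraph V) : ℕ := Znum (PsdForce G)

/-- The enhanced zero forcing number `Ẑ(G)`: the maximum over all loopings of `G` of the
zero forcing number of the looping. -/
noncomputable def Zhat (G : SimpleGraph V) : ℕ := sSup {n | ∃ L : Set V, Zloop G L = n}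

/-- `F` is a direct zero forcing set for `G`: some forcing sequence from `F` fills every
vertex and every vertex that performs a force belongs to `F`. -/
def IsDirectZFSet (G : SimpleGraph V) (F : Set V) : Prop :=
  ∃ seq : List (V × V), ValidSeq (StdForce G) seq F ∧ filledAfter F seq = Set.univ ∧
    sourcesOf seq ⊆ F

/-- The direct zero forcing number `Z_d(G)`. -/
noncomputable def Zd (G : SimpleGraph V) : ℕ :=
  sInf {n | ∃ F : Set V, IsDirectZFSet G F ∧ F.ncard = n}

/-- A zero-nonzero pattern `Y` (entry `Y i j` means the `(i,j)` entry is `*`)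
has a `k × k` submatrix that is a triangle. -/
def HasTriOfSize {ρ γ : Type*} (Y : ρ → γ → Prop) (k : ℕ) : Prop :=
  ∃ (r : Fin k → ρ) (c : Fin k → γ), Function.Injective r ∧ Function.Injective c ∧
    (∀ i, Y (r i) (c i)) ∧ ∀ i j : Fin k, i < j → ¬ Y (r i) (c j)

/-- The triangle number `tri(Y)` of a zero-nonzero pattern. -/
noncomputable def tri {ρ γ : Type*} (Y : ρ → γ → Prop) : ℕ := sSup {k | HasTriOfSize Y k}

/-- Membership in `S_znz(G)`: off the diagonal, the pattern matches the adjacency of `G`. -/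
def InSznz (G : SimpleGraph V) (A : V → V → Prop) : Prop :=
  ∀ i j : V, i ≠ j → (A i j ↔ G.Adj i j)

/-- The zero-nonzero pattern of the looping of `G` with loops at `L`. -/
def loopPattern (G : SimpleGraph V) (L : Set V) : V → V → Prop :=
  fun i j => (i = j ∧ i ∈ L) ∨ (i ≠ j ∧ G.Adj i j)

/-- The submatrix of the pattern `Y` with rows `R` and columns `C` is a triangle:
there are enumerations of `R` and `C` realizing a lower-triangular pattern with `*`
diagonal (in particular `|R| = |C|`). -/
def SubIsTriangle {ρ γ : Type*} (Y : ρ → γ → Prop) (R : Finset ρ) (C : Finset γ) : Prop :=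
  ∃ (k : ℕ) (r : Fin k → ρ) (c : Fin k → γ),
    Function.Injective r ∧ Function.Injective c ∧
    (∀ x : ρ, x ∈ R ↔ ∃ i, r i = x) ∧ (∀ y : γ, y ∈ C ↔ ∃ i, c i = y) ∧
    (∀ i, Y (r i) (c i)) ∧ ∀ i j : Fin k, i < j → ¬ Y (r i) (c j)

/-- `(R, C)` is a persistent triangle of `G`. -/
def PersistentTriangle (G : SimpleGraph V) (R C : Finset V) : Prop :=
  ∀ A : V → V → Prop, InSznz G A → SubIsTriangle A R C

/-- `F` is a direct zero forcing set for `G` from which `R` can be the set of vertices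
that force. -/
def DirectForcesWith (G : SimpleGraph V) (F R : Set V) : Prop :=
  ∃ seq : List (V × V), ValidSeq (StdForce G) seq F ∧ filledAfter F seq = Set.univ ∧
    sourcesOf seq = R ∧ R ⊆ F

/-- `(range r, range c)` is a partition of `G` according to the `m × n` pattern `Y`,
with labelings given by `r` and `c`. -/
def PartitionAccording (G : SimpleGraph V) {m n : ℕ} (Y : Fin m → Fin n → Prop)
    (r : Fin m → V) (c : Fin n → V) : Prop :=
  Function.Injective r ∧ Function.Injective c ∧ (∀ i j, r i ≠ c j) ∧
    (∀ v : V, (∃ i, r i = v) ∨ (∃ j, c j = v)) ∧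
    ∀ i j, G.Adj (r i) (c j) ↔ Y i j

/-- `F` is a zero forcing set for `G` that forces from `V1` to `V2`. -/
def ForcesFromTo (G : SimpleGraph V) (F V1 V2 : Set V) : Prop :=
  V1 ⊆ F ∧ ∃ seq : List (V × V), ValidSeq (StdForce G) seq F ∧
    filledAfter F seq = Set.univ ∧ sourcesOf seq ⊆ V1 ∧ targetsOf seq ⊆ V2

/-- `(V1, V2)` is a partition of the vertex set of `G` into two cliques. -/
def IsCliquePartition (G : SimpleGraph V) (V1 V2 : Set V) : Prop :=
  Disjoint V1 V2 ∧ V1 ∪ V2 = Set.univ ∧ G.IsClique V1 ∧ G.IsClique V2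

/-- `G` is cobipartite. -/
def Cobipartite (G : SimpleGraph V) : Prop := ∃ V1 V2 : Set V, IsCliquePartition G V1 V2

/-- `G` is the cobipartite graph associated with the pattern `Y`, via labelings `r`, `c`. -/
def CobipAssociated (G : SimpleGraph V) {m n : ℕ} (Y : Fin m → Fin n → Prop)
    (r : Fin m → V) (c : Fin n → V) : Prop :=
  PartitionAccording G Y r c ∧ G.IsClique (Set.range r) ∧ G.IsClique (Set.range c)

/-- `z` is a critical vertex: some optimal forcing sequence neither lets `z` force
nor forces `z`. -/
def Critical (G : SimpleGraph V) (z : V) : Prop :=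
  ∃ (F : Set V) (seq : List (V × V)), F.ncard = Z G ∧ ValidSeq (StdForce G) seq F ∧
    filledAfter F seq = Set.univ ∧ z ∉ sourcesOf seq ∧ z ∉ targetsOf seq

/-- `z` is an uncritical vertex: in every optimal forcing sequence, exactly one of the
following holds: `z` performs a force, or `z` gets forced. -/
def Uncritical (G : SimpleGraph V) (z : V) : Prop :=
  ∀ (F : Set V) (seq : List (V × V)), F.ncard = Z G → ValidSeq (StdForce G) seq F →
    filledAfter F seq = Set.univ → (z ∈ sourcesOf seq ↔ z ∉ targetsOf seq)

/-- The maximum nullity `M(G)` over the field `𝔽`. -/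
noncomputable def Mnum (𝔽 : Type*) [Field 𝔽] [Fintype V] [DecidableEq V]
    (G : SimpleGraph V) : ℕ :=
  sSup {k | ∃ A : Matrix V V 𝔽, A.IsSymm ∧ (∀ i j : V, i ≠ j → (A i j ≠ 0 ↔ G.Adj i j)) ∧
    k = Fintype.card V - A.rank}

/-- The minimum rank `mr_𝔽(Y)` of a zero-nonzero pattern over the field `𝔽`. -/
noncomputable def mr (𝔽 : Type*) [Field 𝔽] {m n : ℕ} (Y : Fin m → Fin n → Prop) : ℕ :=
  sInf {k | ∃ A : Matrix (Fin m) (Fin n) 𝔽, (∀ i j, A i j ≠ 0 ↔ Y i j) ∧ A.rank = k}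

/-- `G` is a `k`-tree: there is a construction ordering of the vertices in which the
first `k+1` vertices form a clique and every later vertex is adjacent among the earlier
vertices to exactly a `k`-clique. -/
def IsKTree (k : ℕ) [Fintype V] (G : SimpleGraph V) : Prop :=
  k + 1 ≤ Fintype.card V ∧ ∃ ord : V ≃ Fin (Fintype.card V),
    (∀ u v : V, (ord u : ℕ) < k + 1 → (ord v : ℕ) < k + 1 → u ≠ v → G.Adj u v) ∧
    ∀ v : V, k + 1 ≤ (ord v : ℕ) →
      G.IsClique {u : V | (ord u : ℕ) < (ord v : ℕ) ∧ G.Adj u v} ∧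
      {u : V | (ord u : ℕ) < (ord v : ℕ) ∧ G.Adj u v}.ncard = k


section ZZAux

lemma targetsOf_nil : targetsOf ([] : List (V × V)) = ∅ := by
  ext x; simp [targetsOf]

lemma targetsOf_cons (p : V × V) (l : List (V × V)) :
    targetsOf (p :: l) = {p.2} ∪ targetsOf l := by
  ext x
  simp only [targetsOf, List.mem_cons, Set.mem_setOf_eq, Set.mem_union, Set.mem_singleton_iff]
  constructor
  · rintro ⟨q, (rfl | hq), rfl⟩
    · exact Or.inl rfl
    · exact Or.inr ⟨q, hq, rfl⟩
  · rintro (rfl | ⟨q, hq, rfl⟩)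
    · exact ⟨p, Or.inl rfl, rfl⟩
    · exact ⟨q, Or.inr hq, rfl⟩

lemma mem_targetsOf {l : List (V × V)} {x : V} :
    x ∈ targetsOf l ↔ ∃ i : Fin l.length, (l.get i).2 = x := by
  constructor
  · rintro ⟨p, hp, rfl⟩
    obtain ⟨i, rfl⟩ := List.mem_iff_get.mp hp
    exact ⟨i, rfl⟩
  · rintro ⟨i, rfl⟩
    exact ⟨l.get i, l.get_mem _, rfl⟩

lemma targetsOf_mono {l₁ l₂ : List (V × V)} (h : l₁ ⊆ l₂) :
    targetsOf l₁ ⊆ targetsOf l₂ := by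
  rintro x ⟨p, hp, rfl⟩
  exact ⟨p, h hp, rfl⟩

lemma targetsOf_take_mono (l : List (V × V)) {i j : ℕ} (hij : i ≤ j) :
    targetsOf (l.take i) ⊆ targetsOf (l.take j) := by
  have : l.take i = (l.take j).take i := by
    rw [List.take_take, min_eq_left hij]
  rw [this]
  exact targetsOf_mono (List.take_subset _ _)

lemma validSeq_spec {rule : Set V → V → V → Prop} :
    ∀ (seq : List (V × V)) (F : Set V), ValidSeq rule seq F →
      ∀ (i : ℕ) (h : i < seq.length),
        rule (F ∪ targetsOf (seq.take i)) (seq.get ⟨i, h⟩).1 (seq.get ⟨i, h⟩).2 := by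
  intro seq
  induction seq with
  | nil => intro F _ i h; simp at h
  | cons p rest ih =>
    obtain ⟨v, u⟩ := p
    intro F hv i h
    match i with
    | 0 => simpa [targetsOf_nil] using hv.1
    | Nat.succ i =>
      have h' : i < rest.length := by simpa using h
      have key := ih (insert u F) hv.2.2 i h'
      have hset : insert u F ∪ targetsOf (rest.take i)
          = F ∪ targetsOf (((v, u) :: rest).take (i + 1)) := by
        rw [List.take_succ_cons, targetsOf_cons]
        ext x
        simp only [Set.mem_union, Set.mem_insert_iff, Set.mem_singleton_iff]
        tauto
      rw [hset] at key
      simpa using key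

lemma validSeq_of {rule : Set V → V → V → Prop} :
    ∀ (seq : List (V × V)) (F : Set V),
      List.Pairwise (fun p q : V × V => p.1 ≠ q.1) seq →
      (∀ (i : ℕ) (h : i < seq.length),
        rule (F ∪ targetsOf (seq.take i)) (seq.get ⟨i, h⟩).1 (seq.get ⟨i, h⟩).2) →
      ValidSeq rule seq F := by
  intro seq
  induction seq with
  | nil => intro F _ _; trivial
  | cons p rest ih =>
    obtain ⟨v, u⟩ := p
    intro F hp hr
    refine ⟨by simpa [targetsOf_nil] using hr 0 (by simp), ?_, ?_⟩
    · intro q hq e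
      exact (List.pairwise_cons.mp hp).1 q hq e.symm
    · refine ih (insert u F) (List.pairwise_cons.mp hp).2 ?_
      intro i h
      have key := hr (i + 1) (by simpa using Nat.succ_lt_succ h)
      have hset : F ∪ targetsOf (((v, u) :: rest).take (i + 1))
          = insert u F ∪ targetsOf (rest.take i) := by
        rw [List.take_succ_cons, targetsOf_cons]
        ext x
        simp only [Set.mem_union, Set.mem_insert_iff, Set.mem_singleton_iff]
        tauto
      rw [hset] at key
      simpa using key

def sAdj {ρ γ : Type*} (Y : ρ → γ → Prop) : ρ ⊕ γ → ρ ⊕ γ → Prop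
  | .inl a, .inl a' => a ≠ a'
  | .inl a, .inr b => Y a b
  | .inr b, .inl a => Y a b
  | .inr b, .inr b' => b ≠ b'

lemma sAdj_swap {ρ γ : Type*} {Y : ρ → γ → Prop} (x y : ρ ⊕ γ) :
    sAdj (fun b a => Y a b) x.swap y.swap ↔ sAdj Y x y := by
  rcases x with a | b <;> rcases y with a' | b' <;> exact Iff.rfl

lemma hasTri_flip {ρ γ : Type*} {Y : ρ → γ → Prop} {k : ℕ}
    (h : HasTriOfSize (fun b a => Y a b) k) : HasTriOfSize Y k := by
  obtain ⟨rc, cr, hrc, hcr, hd, hz⟩ := h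
  refine ⟨fun i => cr i.rev, fun i => rc i.rev, ?_, ?_, fun i => hd i.rev, ?_⟩
  · exact fun i j hij => Fin.rev_injective (hcr hij)
  · exact fun i j hij => Fin.rev_injective (hrc hij)
  · intro i j hij
    exact hz j.rev i.rev (Fin.rev_lt_rev.mpr hij)

lemma structIff {ρ γ : Type*} {Y : ρ → γ → Prop} {k : ℕ}
    {u v : Fin k → ρ ⊕ γ}
    (hvu : ∀ t s : Fin k, t ≤ s → v t ≠ u s)
    (hnA : ∀ t s : Fin k, t < s → ¬ sAdj Y (v t) (u s))
    {t s : Fin k} (hts : t < s) :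
    ((∃ a, v t = Sum.inl a) ↔ (∃ b, u s = Sum.inr b)) := by
  constructor
  · rintro ⟨a, ha⟩
    rcases hus : u s with a' | b
    · exfalso
      have hne : a ≠ a' := fun he => hvu t s hts.le (by rw [ha, hus, he])
      have hn := hnA t s hts
      rw [ha, hus] at hn
      exact hn hne
    · exact ⟨b, rfl⟩
  · rintro ⟨b, hb⟩
    rcases hvt : v t with a | b'
    · exact ⟨a, rfl⟩
    · exfalso
      have hne : b' ≠ b := fun he => hvu t s hts.le (by rw [hvt, hb, he])
      have hn := hnA t s hts
      rw [hvt, hb] at hn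
      exact hn hne

lemma coreRow {ρ γ : Type*} (Y : ρ → γ → Prop)
    (hs1 : ∀ a, ∃ b, Y a b) (hs2 : ∀ b, ∃ a, Y a b) {k : ℕ} (hk : 2 ≤ k)
    {u v : Fin k → ρ ⊕ γ} (hu : Function.Injective u)
    (hA : ∀ t, sAdj Y (v t) (u t))
    (hnA : ∀ t s : Fin k, t < s → ¬ sAdj Y (v t) (u s))
    (hucol : ∀ s : Fin k, 0 < (s : ℕ) → ∃ b, u s = Sum.inr b)
    (hvrow : ∀ t : Fin k, (t : ℕ) < k - 1 → ∃ a, v t = Sum.inl a) :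
    HasTriOfSize Y k := by
  classical
  set R : Fin k → ρ :=
    fun i => (v i).elim id (fun _ => (u i).elim id (fun b => (hs2 b).choose)) with hRdef
  set C : Fin k → γ :=
    fun i => (u i).elim (fun _ => (v i).elim (fun a => (hs1 a).choose) id) id with hCdef
  have hR1 : ∀ (i : Fin k) (a : ρ), v i = Sum.inl a → R i = a := by
    intro i a h; simp [hRdef, h]
  have hR2 : ∀ (i : Fin k) (b' b : γ), v i = Sum.inr b' → u i = Sum.inr b →
      R i = (hs2 b).choose := by
    intro i b' b h1 h2; simp [hRdef, h1, h2]
  have hC1 : ∀ (i : Fin k) (b : γ), u i = Sum.inr b → C i = b := by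
    intro i b h; simp [hCdef, h]
  have hC2 : ∀ (i : Fin k) (a' : ρ) (a : ρ), u i = Sum.inl a' → v i = Sum.inl a →
      C i = (hs1 a).choose := by
    intro i a' a h1 h2; simp [hCdef, h1, h2]
  have hik : ∀ {i j : Fin k}, i < j → (i : ℕ) < k - 1 := by
    intro i j hij
    have := j.isLt
    have : (i : ℕ) < (j : ℕ) := hij
    omega
  have hj1 : ∀ {i j : Fin k}, i < j → 0 < (j : ℕ) := by
    intro i j hij
    have : (i : ℕ) < (j : ℕ) := hij
    omega
  have hdiag : ∀ i, Y (R i) (C i) := by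
    intro i
    rcases hvi : v i with a | b
    · rcases hui : u i with a' | b'
      · rw [hR1 i a hvi, hC2 i a' a hui hvi]
        exact (hs1 a).choose_spec
      · rw [hR1 i a hvi, hC1 i b' hui]
        have hA' := hA i
        rw [hvi, hui] at hA'
        exact hA'
    · rcases hui : u i with a' | b'
      · exfalso
        have h1 : ¬ (0 < (i : ℕ)) := by
          intro h
          obtain ⟨b2, hb2⟩ := hucol i h
          rw [hui] at hb2
          exact Sum.inl_ne_inr hb2
        have h2 : ¬ ((i : ℕ) < k - 1) := by
          intro h
          obtain ⟨a2, ha2⟩ := hvrow i h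
          rw [hvi] at ha2
          exact Sum.inr_ne_inl ha2
        omega
      · rw [hR2 i b b' hvi hui, hC1 i b' hui]
        exact (hs2 b').choose_spec
  have hzero : ∀ i j : Fin k, i < j → ¬ Y (R i) (C j) := by
    intro i j hij
    obtain ⟨a, ha⟩ := hvrow i (hik hij)
    obtain ⟨b, hb⟩ := hucol j (hj1 hij)
    rw [hR1 i a ha, hC1 j b hb]
    have hn := hnA i j hij
    rw [ha, hb] at hn
    exact hn
  have hRlt : ∀ i j : Fin k, i < j → R i ≠ R j := by
    intro i j hij
    obtain ⟨a, ha⟩ := hvrow i (hik hij)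
    obtain ⟨b, hb⟩ := hucol j (hj1 hij)
    have hnY : ¬ Y a b := by
      have hn := hnA i j hij
      rw [ha, hb] at hn
      exact hn
    rw [hR1 i a ha]
    rcases hvj : v j with a' | b'
    · rw [hR1 j a' hvj]
      intro he
      apply hnY
      have hA' := hA j
      rw [hvj, hb] at hA'
      exact he ▸ hA'
    · rw [hR2 j b' b hvj hb]
      intro he
      exact hnY (he ▸ (hs2 b).choose_spec)
  have hClt : ∀ i j : Fin k, i < j → C i ≠ C j := by
    intro i j hij
    obtain ⟨b, hb⟩ := hucol j (hj1 hij)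
    rw [hC1 j b hb]
    rcases hui : u i with a' | b'
    · obtain ⟨a, ha⟩ := hvrow i (hik hij)
      rw [hC2 i a' a hui ha]
      have hnY : ¬ Y a b := by
        have hn := hnA i j hij
        rw [ha, hb] at hn
        exact hn
      intro he
      exact hnY (he ▸ (hs1 a).choose_spec)
    · rw [hC1 i b' hui]
      intro he
      have : u i = u j := by rw [hui, hb, he]
      exact absurd (hu this) (Fin.ne_of_lt hij)
  refine ⟨R, C, ?_, ?_, hdiag, hzero⟩
  · intro i j h
    rcases lt_trichotomy i j with hij | rfl | hij
    · exact absurd h (hRlt i j hij)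
    · rfl
    · exact absurd h.symm (hRlt j i hij)
  · intro i j h
    rcases lt_trichotomy i j with hij | rfl | hij
    · exact absurd h (hClt i j hij)
    · rfl
    · exact absurd h.symm (hClt j i hij)

lemma core {ρ γ : Type*} (Y : ρ → γ → Prop)
    (hs1 : ∀ a, ∃ b, Y a b) (hs2 : ∀ b, ∃ a, Y a b) {k : ℕ}
    {u v : Fin k → ρ ⊕ γ} (hu : Function.Injective u)
    (hvu : ∀ t s : Fin k, t ≤ s → v t ≠ u s)
    (hA : ∀ t, sAdj Y (v t) (u t))
    (hnA : ∀ t s : Fin k, t < s → ¬ sAdj Y (v t) (u s)) :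
    HasTriOfSize Y k := by
  rcases Nat.lt_or_ge k 2 with hk | hk
  · interval_cases k
    · exact ⟨Fin.elim0, Fin.elim0, fun a => a.elim0, fun a => a.elim0,
        fun i => i.elim0, fun i => i.elim0⟩
    · obtain ⟨a, b, hab⟩ : ∃ a b, Y a b := by
        rcases hv0 : v 0 with a | b <;> rcases hu0 : u 0 with a' | b'
        · exact ⟨a, (hs1 a).choose, (hs1 a).choose_spec⟩
        · have hA' := hA 0; rw [hv0, hu0] at hA'; exact ⟨a, b', hA'⟩
        · have hA' := hA 0; rw [hv0, hu0] at hA'; exact ⟨a', b, hA'⟩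
        · exact ⟨(hs2 b').choose, b', (hs2 b').choose_spec⟩
      exact ⟨fun _ => a, fun _ => b, fun x y _ => Subsingleton.elim x y,
        fun x y _ => Subsingleton.elim x y, fun _ => hab,
        fun i j hij => absurd (Subsingleton.elim i j) (ne_of_lt hij)⟩
  · have hk0 : 0 < k := by omega
    set z : Fin k := ⟨0, hk0⟩ with hz
    set lst : Fin k := ⟨k - 1, by omega⟩ with hlst
    have hzlst : z < lst := by
      rw [Fin.lt_def]
      simp only [hz, hlst]
      omega
    rcases hv0 : v z with a0 | b0
    · have hucol : ∀ s : Fin k, 0 < (s : ℕ) → ∃ b, u s = Sum.inr b := by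
        intro s hs
        exact (structIff hvu hnA (show z < s from Fin.lt_def.mpr (by simpa [hz] using hs))).mp
          ⟨a0, hv0⟩
      have hulst := hucol lst (by simp only [hlst]; omega)
      have hvrow : ∀ t : Fin k, (t : ℕ) < k - 1 → ∃ a, v t = Sum.inl a := by
        intro t ht
        exact (structIff hvu hnA (show t < lst from Fin.lt_def.mpr (by simpa [hlst] using ht))).mpr
          hulst
      exact coreRow Y hs1 hs2 hk hu hA hnA hucol hvrow
    · apply hasTri_flip (Y := Y)
      have hu' : Function.Injective (fun i => (u i).swap) := fun i j h =>
        hu (Sum.swap_leftInverse.injective h)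
      have hvu' : ∀ t s : Fin k, t ≤ s → (fun i => (v i).swap) t ≠ (fun i => (u i).swap) s :=
        fun t s hts h => hvu t s hts (Sum.swap_leftInverse.injective h)
      have hA' : ∀ t, sAdj (fun b a => Y a b) ((v t).swap) ((u t).swap) :=
        fun t => (sAdj_swap _ _).mpr (hA t)
      have hnA' : ∀ t s : Fin k, t < s →
          ¬ sAdj (fun b a => Y a b) ((v t).swap) ((u s).swap) :=
        fun t s hts h => hnA t s hts ((sAdj_swap _ _).mp h)
      have hucol : ∀ s : Fin k, 0 < (s : ℕ) → ∃ b, (u s).swap = Sum.inr b := by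
        intro s hs
        refine (structIff hvu' hnA'
          (show z < s from Fin.lt_def.mpr (by simpa [hz] using hs))).mp ⟨b0, ?_⟩
        rw [hv0]; rfl
      have hulst := hucol lst (by simp only [hlst]; omega)
      have hvrow : ∀ t : Fin k, (t : ℕ) < k - 1 → ∃ a, (v t).swap = Sum.inl a := by
        intro t ht
        exact (structIff hvu' hnA'
          (show t < lst from Fin.lt_def.mpr (by simpa [hlst] using ht))).mpr hulst
      exact coreRow (fun b a => Y a b) hs2 hs1 hk hu' hA' hnA' hucol hvrow


lemma tri_of_zf {V : Type*} [Fintype V] [DecidableEq V] {m n : ℕ}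
    (Y : Fin m → Fin n → Prop) (G : SimpleGraph V) (r : Fin m → V) (c : Fin n → V)
    (hassoc : CobipAssociated G Y r c)
    (hsat1 : ∀ i, ∃ j, G.Adj (r i) (c j)) (hsat2 : ∀ j, ∃ i, G.Adj (r i) (c j))
    (F : Set V) (hF : IsZFSet (StdForce G) F) :
    ∃ k, HasTriOfSize Y k ∧ F.ncard + k = m + n := by
  obtain ⟨⟨hrinj, hcinj, hrc, hcover, hadjY⟩, hclR, hclC⟩ := hassoc
  obtain ⟨seq, hval, hfill⟩ := hF
  set k := seq.length with hk
  set uu : Fin k → V := fun i => (seq.get i).2 with huu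
  set vv : Fin k → V := fun i => (seq.get i).1 with hvv
  have hspec : ∀ i : Fin k, StdForce G (F ∪ targetsOf (seq.take i)) (vv i) (uu i) :=
    fun i => validSeq_spec seq F hval i i.isLt
  have hu_later : ∀ i j : Fin k, i < j → uu i ∈ targetsOf (seq.take j) := by
    intro i j hij
    have hlen : (i : ℕ) < (seq.take (j : ℕ)).length := by
      rw [List.length_take]
      have := j.isLt
      have : (i : ℕ) < (j : ℕ) := hij
      omega
    refine ⟨(seq.take (j : ℕ)).get ⟨i, hlen⟩, List.get_mem _ _, ?_⟩
    have hgt : (seq.take (j : ℕ))[(i : ℕ)]'hlen = seq[(i : ℕ)]'i.isLt :=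
      List.getElem_take
    simp only [List.get_eq_getElem, hgt, huu]
  have hvmem : ∀ i : Fin k, vv i ∈ F ∪ targetsOf (seq.take i) := fun i => (hspec i).1
  have humem : ∀ i : Fin k, uu i ∉ F ∪ targetsOf (seq.take i) := fun i => (hspec i).2.1
  have hadj : ∀ i : Fin k, G.Adj (vv i) (uu i) := fun i => (hspec i).2.2.1
  have huniq : ∀ i : Fin k, ∀ w, G.Adj (vv i) w → w ∉ F ∪ targetsOf (seq.take i) → w = uu i :=
    fun i => (hspec i).2.2.2
  have huinj : Function.Injective uu := by
    intro i j h
    rcases lt_trichotomy i j with hij | rfl | hij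
    · exact absurd (Or.inr (h ▸ hu_later i j hij)) (humem j)
    · rfl
    · exact absurd (Or.inr (h.symm ▸ hu_later j i hij)) (humem i)
  have hvu : ∀ i j : Fin k, i ≤ j → vv i ≠ uu j := by
    intro i j hij he
    apply humem j
    rcases hvmem i with h | h
    · exact Or.inl (he ▸ h)
    · exact Or.inr (targetsOf_take_mono seq hij (he ▸ h))
  have hnadj : ∀ i j : Fin k, i < j → ¬ G.Adj (vv i) (uu j) := by
    intro i j hij hadj'
    have hnm : uu j ∉ F ∪ targetsOf (seq.take i) := by
      intro hx
      apply humem j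
      rcases hx with h | h
      · exact Or.inl h
      · exact Or.inr (targetsOf_take_mono seq hij.le h)
    exact absurd (huinj (huniq i (uu j) hadj' hnm)) (Fin.ne_of_lt hij).symm
  have hnotF : ∀ i : Fin k, uu i ∉ F := fun i h => humem i (Or.inl h)
  have htar : targetsOf seq = Set.range uu := by
    ext x
    rw [mem_targetsOf]
    constructor
    · rintro ⟨i, rfl⟩; exact ⟨i, rfl⟩
    · rintro ⟨i, rfl⟩; exact ⟨i, rfl⟩
  have hrange : Set.range uu = Fᶜ := by
    apply Set.eq_of_subset_of_subset
    · rintro x ⟨i, rfl⟩; exact hnotF i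
    · intro x hx
      have hx2 : x ∈ F ∪ targetsOf seq := by
        have : x ∈ filledAfter F seq := by rw [hfill]; trivial
        exact this
      rcases hx2 with h | h
      · exact absurd h hx
      · rwa [htar] at h
  have hbij : Function.Bijective (Sum.elim r c) := by
    constructor
    · rintro (i | j) (i' | j') h
      · rw [hrinj h]
      · exact absurd h (hrc i j')
      · exact absurd h.symm (hrc i' j)
      · rw [hcinj h]
    · intro x
      rcases hcover x with ⟨i, hi⟩ | ⟨j, hj⟩
      · exact ⟨Sum.inl i, hi⟩
      · exact ⟨Sum.inr j, hj⟩
  set e := Equiv.ofBijective _ hbij with he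
  have hcardV : Nat.card V = m + n := by
    rw [← Nat.card_congr e]
    simp [Nat.card_sum]
  have hcard1 : (Set.range uu).ncard = k := by
    rw [← Set.image_univ, Set.ncard_image_of_injective _ huinj, Set.ncard_univ,
      Nat.card_eq_fintype_card, Fintype.card_fin]
  have hcard2 : F.ncard + k = m + n := by
    have hcc := Set.ncard_add_ncard_compl F
    rw [← hrange, hcard1, hcardV] at hcc
    exact hcc
  have hE : ∀ x : V, Sum.elim r c (e.symm x) = x := fun x => e.apply_symm_apply x
  have hadj_iff : ∀ x y : Fin m ⊕ Fin n,
      G.Adj (Sum.elim r c x) (Sum.elim r c y) ↔ sAdj Y x y := by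
    rintro (i | j) (i' | j')
    · show G.Adj (r i) (r i') ↔ i ≠ i'
      constructor
      · intro h heq
        rw [heq] at h
        exact G.irrefl h
      · intro h
        exact hclR (Set.mem_range_self i) (Set.mem_range_self i') fun he => h (hrinj he)
    · exact hadjY i j'
    · show G.Adj (c j) (r i') ↔ Y i' j
      rw [SimpleGraph.adj_comm]
      exact hadjY i' j
    · show G.Adj (c j) (c j') ↔ j ≠ j'
      constructor
      · intro h heq
        rw [heq] at h
        exact G.irrefl h
      · intro h
        exact hclC (Set.mem_range_self j) (Set.mem_range_self j') fun he => h (hcinj he)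
  have hs1' : ∀ i : Fin m, ∃ j, Y i j := fun i => (hsat1 i).imp fun j hj => (hadjY i j).mp hj
  have hs2' : ∀ j : Fin n, ∃ i, Y i j := fun j => (hsat2 j).imp fun i hi => (hadjY i j).mp hi
  refine ⟨k, ?_, hcard2⟩
  refine core Y hs1' hs2' (u := fun i => e.symm (uu i)) (v := fun i => e.symm (vv i))
    (fun i j h => huinj (e.symm.injective h)) (fun t s hts h => hvu t s hts (e.symm.injective h))
    ?_ ?_
  · intro t
    rw [← hadj_iff, hE, hE]
    exact hadj t
  · intro t s hts h
    rw [← hadj_iff, hE, hE] at h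
    exact hnadj t s hts h

end ZZAux

/-- If `G` is the cobipartite graph associated with the `m × n`
pattern `Y` and is saturated with respect to the corresponding clique partition, then
`Z(G) = m + n − tri(Y)`. -/
theorem Z_eq_of_cobip_saturated
    {V : Type*} [Fintype V] [DecidableEq V] {m n : ℕ} (Y : Fin m → Fin n → Prop)
    (G : SimpleGraph V) (r : Fin m → V) (c : Fin n → V)
    (hassoc : CobipAssociated G Y r c)
    (hsat1 : ∀ i, ∃ j, G.Adj (r i) (c j)) (hsat2 : ∀ j, ∃ i, G.Adj (r i) (c j)) :
    Z G = m + n - tri Y := by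
  classical
  obtain ⟨⟨hrinj, hcinj, hrc, hcover, hadjY⟩, hclR, hclC⟩ := id hassoc
  -- basic facts about `tri`
  have h0 : HasTriOfSize Y 0 :=
    ⟨Fin.elim0, Fin.elim0, fun a => a.elim0, fun a => a.elim0, fun i => i.elim0, fun i => i.elim0⟩
  have hbdd : BddAbove {k | HasTriOfSize Y k} := by
    refine ⟨m, ?_⟩
    rintro k ⟨rk, ck, hrk, -, -, -⟩
    simpa using Fintype.card_le_of_injective rk hrk
  have hTmem : HasTriOfSize Y (tri Y) :=
    Nat.sSup_mem (s := {k | HasTriOfSize Y k}) ⟨0, h0⟩ hbdd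
  have hle_tri : ∀ k, HasTriOfSize Y k → k ≤ tri Y := fun k hk => le_csSup hbdd hk
  -- cardinality of V
  have hbij : Function.Bijective (Sum.elim r c) := by
    constructor
    · rintro (i | j) (i' | j') h
      · rw [hrinj h]
      · exact absurd h (hrc i j')
      · exact absurd h.symm (hrc i' j)
      · rw [hcinj h]
    · intro x
      rcases hcover x with ⟨i, hi⟩ | ⟨j, hj⟩
      · exact ⟨Sum.inl i, hi⟩
      · exact ⟨Sum.inr j, hj⟩
  have hcardV : Nat.card V = m + n := by
    rw [← Nat.card_congr (Equiv.ofBijective _ hbij)]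
    simp [Nat.card_sum]
  -- the set whose infimum is `Z G`
  set S : Set ℕ := {s | ∃ F : Set V, IsZFSet (StdForce G) F ∧ F.ncard = s} with hS
  have hZdef : Z G = sInf S := rfl
  have hlow : ∀ s ∈ S, m + n - tri Y ≤ s := by
    rintro s ⟨F, hF, rfl⟩
    obtain ⟨k, hk, hck⟩ := tri_of_zf Y G r c hassoc hsat1 hsat2 F hF
    have := hle_tri k hk
    omega
  -- the explicit forcing set coming from a maximum triangle
  set T := tri Y with hT
  obtain ⟨rt, ct, hrt, hct, hdi, hze⟩ := hTmem
  set g : Fin T → V := fun i => c (ct i) with hg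
  have hginj : Function.Injective g := fun i j h =>
    hct (hcinj (show c (ct i) = c (ct j) from h))
  set F : Set V := (Set.range g)ᶜ with hFdef
  set seq : List (V × V) := List.ofFn (fun i : Fin T => (r (rt i), c (ct i))) with hseq
  have hlen : seq.length = T := by simp [hseq]
  have htake : ∀ i : ℕ, targetsOf (seq.take i) = {x | ∃ j : Fin T, (j : ℕ) < i ∧ c (ct j) = x} := by
    intro i
    ext x
    rw [mem_targetsOf]
    constructor
    · rintro ⟨l, rfl⟩
      have hlen2 : (seq.take i).length = min i T := by rw [List.length_take, hlen]
      have hlm : (l : ℕ) < min i T := Nat.lt_of_lt_of_le l.isLt (le_of_eq hlen2)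
      have hl2 : (l : ℕ) < T := lt_of_lt_of_le hlm (min_le_right _ _)
      have hl3 : (l : ℕ) < i := lt_of_lt_of_le hlm (min_le_left _ _)
      refine ⟨⟨l, hl2⟩, hl3, ?_⟩
      have hgt : (seq.take i)[(l : ℕ)]'l.isLt = seq[(l : ℕ)]'(by rw [hlen]; exact hl2) :=
        List.getElem_take
      simp only [List.get_eq_getElem, hgt]
      simp only [hseq, List.getElem_ofFn]
    · rintro ⟨j, hj, rfl⟩
      have hl : (j : ℕ) < (seq.take i).length := by
        rw [List.length_take, hlen]
        exact lt_min hj j.isLt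
      refine ⟨⟨j, hl⟩, ?_⟩
      have hgt : (seq.take i)[(j : ℕ)]'hl = seq[(j : ℕ)]'(by rw [hlen]; exact j.isLt) :=
        List.getElem_take
      simp only [List.get_eq_getElem, hgt]
      simp only [hseq, List.getElem_ofFn]
  have hpair : List.Pairwise (fun p q : V × V => p.1 ≠ q.1) seq := by
    rw [hseq, List.pairwise_ofFn]
    intro i j hij h
    exact absurd (hrt (hrinj h)) (Fin.ne_of_lt hij)
  have hvalid : ValidSeq (StdForce G) seq F := by
    refine validSeq_of seq F hpair ?_
    intro i h
    have hiT : i < T := by rwa [hlen] at h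
    have hget : seq.get ⟨i, h⟩ = (r (rt ⟨i, hiT⟩), c (ct ⟨i, hiT⟩)) := by
      simp only [hseq, List.get_eq_getElem, List.getElem_ofFn]
    rw [hget, htake i]
    refine ⟨?_, ?_, ?_, ?_⟩
    · left
      intro hx
      obtain ⟨j, hj⟩ := hx
      exact hrc (rt ⟨i, hiT⟩) (ct j) hj.symm
    · rintro (hx | ⟨j, hj, hjx⟩)
      · exact hx ⟨⟨i, hiT⟩, rfl⟩
      · have : j = ⟨i, hiT⟩ := hct (hcinj hjx)
        rw [this] at hj
        exact absurd hj (lt_irrefl i)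
    · exact (hadjY _ _).mpr (hdi ⟨i, hiT⟩)
    · intro w hw hwn
      have hwr : w ∈ Set.range g := by
        by_contra hc
        exact hwn (Or.inl hc)
      obtain ⟨j, rfl⟩ := hwr
      have hji : ¬ ((j : ℕ) < i) := fun hji => hwn (Or.inr ⟨j, hji, rfl⟩)
      have hYij : Y (rt ⟨i, hiT⟩) (ct j) := (hadjY _ _).mp hw
      have hij2 : ¬ (⟨i, hiT⟩ : Fin T) < j := fun hlt => hze _ _ hlt hYij
      have : j = (⟨i, hiT⟩ : Fin T) := by
        apply Fin.ext
        show (j : ℕ) = i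
        have h1 : ¬ ((i : ℕ) < (j : ℕ)) := fun hx => hij2 (Fin.lt_def.mpr hx)
        omega
      rw [this]
  have hfilled : filledAfter F seq = Set.univ := by
    have htar : targetsOf seq = Set.range g := by
      have : seq = seq.take T := by rw [← hlen, List.take_length]
      rw [this, htake T]
      ext x
      constructor
      · rintro ⟨j, -, rfl⟩; exact ⟨j, rfl⟩
      · rintro ⟨j, rfl⟩; exact ⟨j, j.isLt, rfl⟩
    rw [filledAfter, htar, hFdef, Set.compl_union_self]
  have hcardg : (Set.range g).ncard = T := by
    rw [← Set.image_univ, Set.ncard_image_of_injective _ hginj, Set.ncard_univ,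
      Nat.card_eq_fintype_card, Fintype.card_fin]
  have hcardF : F.ncard = m + n - T := by
    have hcc := Set.ncard_add_ncard_compl (Set.range g)
    rw [hcardg, hcardV, ← hFdef] at hcc
    omega
  have hmem : (m + n - T) ∈ S := ⟨F, ⟨seq, hvalid, hfilled⟩, hcardF⟩
  rw [hZdef]
  exact le_antisymm (Nat.sInf_le hmem) (le_csInf ⟨_, hmem⟩ hlow)
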